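/- Define F₁(n) = 2n and F_{i+1}(n) = F_i^{(n)}(1). Then for every n ≥ 1, F_{2n}(3) ≥ F_n(n). -/

import Mathlib

/-- The fast-growing family defining Ackermann: `F 1 n = 2n` and
`F (i+1) n = F i iterated n times on 1`. -/
def F : ℕ → ℕ → ℕ
  | 0, _ => 0
  | 1, n => 2 * n
  | i + 2, n => (F (i + 1))^[n] 1

lemma F_succ_succ (i n : ℕ) : F (i + 2) n = (F (i + 1))^[n] 1 := by
  rfl

lemma F_ge (i : ℕ) : ∀ m, 1 ≤ m → 2 * m ≤ F (i + 1) m := by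
  induction i with
  | zero => intro m hm; simp [F]
  | succ i ih =>
    have sub : ∀ m, m + 1 ≤ (F (i + 1))^[m] 1 := by
      intro m
      induction m with
      | zero => simp
      | succ m ihm =>
        rw [Function.iterate_succ_apply']
        calc m + 2 ≤ 2 * ((F (i + 1))^[m] 1) := by omega
          _ ≤ F (i + 1) ((F (i + 1))^[m] 1) := ih _ (by omega)
    intro m hm
    obtain ⟨k, rfl⟩ : ∃ k, m = k + 1 := ⟨m - 1, by omega⟩
    rw [F_succ_succ, Function.iterate_succ_apply']
    have := sub k
    calc 2 * (k + 1) ≤ 2 * ((F (i + 1))^[k] 1) := by omega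
      _ ≤ F (i + 1) ((F (i + 1))^[k] 1) := ih _ (by omega)

lemma F_iter_ge (i : ℕ) : ∀ m, m + 1 ≤ (F (i + 1))^[m] 1 := by
  intro m
  induction m with
  | zero => simp
  | succ m ihm =>
    rw [Function.iterate_succ_apply']
    calc m + 2 ≤ 2 * ((F (i + 1))^[m] 1) := by omega
      _ ≤ F (i + 1) ((F (i + 1))^[m] 1) := F_ge _ _ (by omega)

lemma F_iter_pow (i : ℕ) : ∀ m, 2 ^ m ≤ (F (i + 1))^[m] 1 := by
  intro m
  induction m with
  | zero => simp
  | succ m ihm =>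
    rw [Function.iterate_succ_apply', pow_succ]
    have h1 : 1 ≤ (F (i + 1))^[m] 1 := le_trans (by omega) (F_iter_ge i m)
    calc 2 ^ m * 2 ≤ ((F (i + 1))^[m] 1) * 2 := by
          exact Nat.mul_le_mul_right 2 ihm
      _ = 2 * ((F (i + 1))^[m] 1) := by ring
      _ ≤ F (i + 1) ((F (i + 1))^[m] 1) := F_ge _ _ h1

lemma F_mono (i : ℕ) : Monotone (F (i + 1)) := by
  cases i with
  | zero =>
    intro a b hab
    simp only [F]
    omega
  | succ i =>
    apply monotone_nat_of_le_succ
    intro n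
    rw [F_succ_succ, F_succ_succ, Function.iterate_succ_apply']
    have h1 : 1 ≤ (F (i + 1))^[n] 1 := le_trans (by omega) (F_iter_ge i n)
    calc (F (i + 1))^[n] 1 ≤ 2 * ((F (i + 1))^[n] 1) := by omega
      _ ≤ F (i + 1) ((F (i + 1))^[n] 1) := F_ge _ _ h1

lemma F_claim : ∀ k n, 1 ≤ n → F n (k + 3) ≤ F (n + k) 3 := by
  intro k
  induction k with
  | zero => intro n hn; simp
  | succ k ih =>
    intro n hn
    obtain ⟨j, rfl⟩ : ∃ j, n = j + 1 := ⟨n - 1, by omega⟩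
    have key : F (j + 1) (k + 1 + 3) ≤ F (j + 2) (k + 3) := by
      rw [F_succ_succ]
      have : (F (j + 1))^[k + 3] 1 = F (j + 1) ((F (j + 1))^[k + 2] 1) :=
        Function.iterate_succ_apply' _ _ _
      rw [this]
      apply F_mono
      have hpow := F_iter_pow j (k + 2)
      have h2 : k + 1 + 3 ≤ 2 ^ (k + 2) := by
        have := Nat.lt_two_pow_self (n := k + 1)
        calc k + 4 ≤ 2 * (k + 2) := by omega
          _ ≤ 2 * 2 ^ (k + 1) := by omega
          _ = 2 ^ (k + 2) := by ring
      omega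
    calc F (j + 1) (k + 1 + 3) ≤ F (j + 2) (k + 3) := key
      _ ≤ F (j + 2 + k) 3 := ih (j + 2) (by omega)
      _ = F (j + 1 + (k + 1)) 3 := by ring_nf

/-- For every `n ≥ 1`, `F (2n) 3 ≥ F n n` (dominates the diagonal Ackermann). -/
theorem F_two_n_three (n : ℕ) (hn : 1 ≤ n) : F n n ≤ F (2 * n) 3 := by
  obtain ⟨j, rfl⟩ : ∃ j, n = j + 1 := ⟨n - 1, by omega⟩
  calc F (j + 1) (j + 1) ≤ F (j + 1) (j + 1 + 3) := F_mono j (by omega)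
    _ ≤ F (j + 1 + (j + 1)) 3 := F_claim (j + 1) (j + 1) (by omega)
    _ = F (2 * (j + 1)) 3 := by ring_nf
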